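/- Let H = (V,E) be a finite simple graph and f_i : ℕ → ℤ convex functions. Let f* denote the minimum over subgraphs G ⊆ H of ∑_{i∈V} f_i(deg_G(i)), and define for each i and k ∈ {1,…,deg_H(i)} the cost c_i^k := f_i(k) - f_i(k-1). Then for every subgraph G ⊆ H and every choice of subsets K_i ⊆ {1,…,deg_H(i)} with |K_i| = deg_G(i), we have ∑_{i∈V} ∑_{k∈K_i} c_i^k ≥ f* - ∑_{i∈V} f_i(0). -/

import Mathlib

/-- Degree of vertex `i` in the subgraph with edge set `F`. -/
def subDeg {V : Type*} [DecidableEq V] (F : Finset (Sym2 V)) (i : V) : ℕ :=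
  (F.filter fun e => i ∈ e).card

lemma mono_c (f : ℕ → ℤ) (hconv : ∀ k : ℕ, 0 < k → 2 * f k ≤ f (k - 1) + f (k + 1))
    {a b : ℕ} (ha : 1 ≤ a) (hab : a ≤ b) : f a - f (a - 1) ≤ f b - f (b - 1) := by
  induction b, hab using Nat.le_induction with
  | base => exact le_refl _
  | succ n hn ih =>
    refine ih.trans ?_
    have h := hconv n (by omega)
    simp only [Nat.add_sub_cancel]
    linarith

lemma sum_subset_ge (c : ℕ → ℤ) (hc : ∀ a b : ℕ, 1 ≤ a → a ≤ b → c a ≤ c b) :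
    ∀ S : Finset ℕ, (∀ x ∈ S, 1 ≤ x) → ∑ k ∈ Finset.Icc 1 S.card, c k ≤ ∑ k ∈ S, c k := by
  intro S
  induction S using Finset.strongInduction with
  | _ S ih =>
    intro hS
    rcases S.eq_empty_or_nonempty with rfl | hne
    · simp
    · set m := S.max' hne with hm
      have hmem := S.max'_mem hne
      have hsub : S ⊆ Finset.Icc 1 m := fun x hx =>
        Finset.mem_Icc.mpr ⟨hS x hx, S.le_max' x hx⟩
      have hm1 : 1 ≤ m := hS m hmem
      have hcard_le : S.card ≤ m := by
        have := Finset.card_le_card hsub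
        simpa [Nat.card_Icc] using this
      have hpos : 1 ≤ S.card := Finset.card_pos.mpr hne
      obtain ⟨d, hd⟩ : ∃ d, S.card = d + 1 := ⟨S.card - 1, by omega⟩
      have herase : (S.erase m).card = d := by
        rw [Finset.card_erase_of_mem hmem, hd]; omega
      have hIcc : Finset.Icc 1 S.card = insert S.card (Finset.Icc 1 d) := by
        rw [hd]
        exact (Finset.insert_Icc_right_eq_Icc_add_one (by omega)).symm
      rw [hIcc, Finset.sum_insert (by simp [Finset.mem_Icc]; omega)]
      have h1 : ∑ k ∈ S, c k = c m + ∑ k ∈ S.erase m, c k :=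
        (Finset.add_sum_erase _ _ hmem).symm
      rw [h1]
      have h2 : ∑ k ∈ Finset.Icc 1 d, c k ≤ ∑ k ∈ S.erase m, c k := by
        have := ih (S.erase m) (Finset.erase_ssubset hmem)
          (fun x hx => hS x (Finset.mem_of_mem_erase hx))
        rwa [herase] at this
      have h3 : c S.card ≤ c m := hc _ _ hpos hcard_le
      exact add_le_add h3 h2

lemma telescope (f : ℕ → ℤ) (d : ℕ) :
    ∑ k ∈ Finset.Icc 1 d, (f k - f (k - 1)) = f d - f 0 := by
  induction d with
  | zero => simp
  | succ n ih =>
    rw [← Finset.insert_Icc_right_eq_Icc_add_one (by omega), Finset.sum_insert (by simp [Finset.mem_Icc])]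
    rw [ih]
    simp only [Nat.add_sub_cancel]
    ring

theorem matching_reduction_lower_bound {V : Type*} [Fintype V] [DecidableEq V]
    (H : SimpleGraph V) [DecidableRel H.Adj]
    (f : V → ℕ → ℤ)
    (hconv : ∀ i, ∀ k : ℕ, 0 < k → 2 * f i k ≤ f i (k - 1) + f i (k + 1))
    (fstar : ℤ)
    (hstar : IsLeast {x : ℤ | ∃ F ⊆ H.edgeFinset, x = ∑ i, f i (subDeg F i)} fstar)
    (F : Finset (Sym2 V)) (hF : F ⊆ H.edgeFinset)
    (K : V → Finset ℕ)
    (hK : ∀ i, K i ⊆ Finset.Icc 1 (H.degree i))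
    (hKcard : ∀ i, (K i).card = subDeg F i) :
    ∑ i, ∑ k ∈ K i, (f i k - f i (k - 1)) ≥ fstar - ∑ i, f i 0 := by
  have hle : fstar ≤ ∑ i, f i (subDeg F i) := hstar.2 ⟨F, hF, rfl⟩
  have key : ∀ i, f i (subDeg F i) - f i 0 ≤ ∑ k ∈ K i, (f i k - f i (k - 1)) := by
    intro i
    have hS : ∀ x ∈ K i, 1 ≤ x := fun x hx => (Finset.mem_Icc.mp (hK i hx)).1
    have := sum_subset_ge (fun k => f i k - f i (k - 1))
      (fun a b ha hab => mono_c (f i) (hconv i) ha hab) (K i) hS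
    rwa [hKcard i, telescope (f i) (subDeg F i)] at this
  calc fstar - ∑ i, f i 0 ≤ (∑ i, f i (subDeg F i)) - ∑ i, f i 0 := by linarith
    _ = ∑ i, (f i (subDeg F i) - f i 0) := (Finset.sum_sub_distrib _ _).symm
    _ ≤ ∑ i, ∑ k ∈ K i, (f i k - f i (k - 1)) := Finset.sum_le_sum fun i _ => key i
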